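/- The category of separable Banach spaces with linear isometric embeddings as arrows has the amalgamation property: for all separable real Banach spaces Z, X, Y and all linear isometric embeddings f : Z → X and g : Z → Y, there exist a separable Banach space W and linear isometric embeddings f' : X → W and g' : Y → W with f'∘f = g'∘g. -/

import Mathlib

open TopologicalSpace Metric Set

private lemma l1_norm {X Y : Type} [NormedAddCommGroup X] [NormedAddCommGroup Y]
    (a : X) (b : Y) : ‖(WithLp.equiv 1 (X × Y)).symm (a, b)‖ = ‖a‖ + ‖b‖ := by
  rw [WithLp.prod_norm_eq_add (by norm_num)]
  simp

set_option maxHeartbeats 1000000 in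
set_option synthInstance.maxHeartbeats 200000 in
theorem separable_banach_amalgamation
    (Z X Y : Type) [NormedAddCommGroup Z] [NormedSpace ℝ Z] [CompleteSpace Z]
    [SeparableSpace Z]
    [NormedAddCommGroup X] [NormedSpace ℝ X] [CompleteSpace X] [SeparableSpace X]
    [NormedAddCommGroup Y] [NormedSpace ℝ Y] [CompleteSpace Y] [SeparableSpace Y]
    (f : Z →ₗᵢ[ℝ] X) (g : Z →ₗᵢ[ℝ] Y) :
    ∃ (W : Type) (_ : NormedAddCommGroup W) (_ : NormedSpace ℝ W) (_ : CompleteSpace W)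
      (_ : SeparableSpace W) (f' : X →ₗᵢ[ℝ] W) (g' : Y →ₗᵢ[ℝ] W),
      f'.comp f = g'.comp g := by
  classical
  set E := WithLp 1 (X × Y) with hE
  let ι : (X × Y) ≃ₗ[ℝ] E := (WithLp.linearEquiv 1 ℝ (X × Y)).symm
  let T : Z →ₗ[ℝ] E := ι.toLinearMap ∘ₗ (f.toLinearMap.prod (-g.toLinearMap))
  have hT : ∀ z, T z = (WithLp.equiv 1 (X × Y)).symm (f z, -g z) := fun z => rfl
  have hTnorm : ∀ z, ‖T z‖ = 2 * ‖z‖ := by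
    intro z
    rw [hT, l1_norm, f.norm_map, norm_neg, g.norm_map]; ring
  have lnorm : ∀ (a : X) (b : Y), ‖ι (a, b)‖ = ‖a‖ + ‖b‖ := fun a b => l1_norm a b
  set S : Submodule ℝ E := LinearMap.range T with hS
  -- closedness of S
  have hanti : AntilipschitzWith 1 T := by
    apply AntilipschitzWith.of_le_mul_dist
    intro x y
    rw [dist_eq_norm (T x) (T y), dist_eq_norm, ← map_sub, hTnorm, NNReal.coe_one, one_mul]
    linarith [norm_nonneg (x - y)]
  have hlip : LipschitzWith 2 T := by
    apply LipschitzWith.of_dist_le_mul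
    intro x y
    rw [dist_eq_norm (T x) (T y), dist_eq_norm, ← map_sub, hTnorm]
    simp
  have hclosed : IsClosed (S : Set E) := by
    have h := AntilipschitzWith.isClosed_range (α := Z) (β := E) hanti hlip.uniformContinuous
    rw [hS, LinearMap.coe_range]
    exact h
  haveI : IsClosed (S : Set E) := hclosed
  letI : NormedAddCommGroup (E ⧸ S) := Submodule.Quotient.normedAddCommGroup S
  letI : NormedSpace ℝ (E ⧸ S) := Submodule.Quotient.normedSpace S ℝ
  haveI : CompleteSpace E := inferInstanceAs (CompleteSpace (WithLp 1 (X × Y)))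
  haveI : CompleteSpace (E ⧸ S) := Submodule.Quotient.completeSpace S
  haveI : SeparableSpace E := by
    have h1 : SeparableSpace (X × Y) := inferInstance
    exact (WithLp.prodContinuousLinearEquiv 1 ℝ X Y).symm.toHomeomorph.isQuotientMap.separableSpace
  haveI : SeparableSpace (E ⧸ S) :=
    (QuotientAddGroup.isQuotientMap_mk _).separableSpace
  -- the embeddings
  -- auxiliary: norm of mk (ι (a, b))
  have key : ∀ (a : X) (b : Y) (c : ℝ),
      (∀ z : Z, c ≤ ‖a + f z‖ + ‖b - g z‖) →
      c ≤ ‖(Submodule.Quotient.mk (ι (a, b)) : E ⧸ S)‖ := by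
    intro a b c hc
    refine le_of_forall_pos_le_add ?_
    intro ε hε
    obtain ⟨m, hm, hlt⟩ := Submodule.Quotient.norm_mk_lt
      (Submodule.Quotient.mk (ι (a, b)) : E ⧸ S) hε
    rw [Submodule.Quotient.eq] at hm
    obtain ⟨z, hz⟩ := hm
    have hmval : m = ι (a + f z, b + -g z) := by
      have : m = ι (a, b) + T z := by
        rw [hz]; abel
      rw [this, hT]
      show _ = ι ((a, b) + (f z, -g z))
      rw [map_add]; rfl
    have hnm : ‖m‖ = ‖a + f z‖ + ‖b - g z‖ := by
      rw [hmval, lnorm]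
      congr 1
      rw [sub_eq_add_neg]
    calc c ≤ ‖a + f z‖ + ‖b - g z‖ := hc z
    _ = ‖m‖ := hnm.symm
    _ ≤ ‖(Submodule.Quotient.mk (ι (a, b)) : E ⧸ S)‖ + ε := le_of_lt hlt
  -- the two embeddings
  let jX : X →ₗ[ℝ] E ⧸ S := S.mkQ ∘ₗ (ι.toLinearMap ∘ₗ LinearMap.inl ℝ X Y)
  let jY : Y →ₗ[ℝ] E ⧸ S := S.mkQ ∘ₗ (ι.toLinearMap ∘ₗ LinearMap.inr ℝ X Y)
  have hjX : ∀ x, jX x = Submodule.Quotient.mk (ι (x, 0)) := fun _ => rfl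
  have hjY : ∀ y, jY y = Submodule.Quotient.mk (ι (0, y)) := fun _ => rfl
  have hfX : ∀ x : X, ‖jX x‖ = ‖x‖ := by
    intro x
    refine le_antisymm ?_ ?_
    · calc ‖jX x‖ ≤ ‖ι (x, 0)‖ := Submodule.Quotient.norm_mk_le S _
      _ = ‖x‖ + ‖(0 : Y)‖ := lnorm x 0
      _ = ‖x‖ := by simp
    · rw [hjX]
      refine key x 0 ‖x‖ fun z => ?_
      have h1 : ‖x‖ ≤ ‖x + f z‖ + ‖f z‖ := by
        calc ‖x‖ = ‖(x + f z) + -(f z)‖ := by congr 1; abel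
        _ ≤ ‖x + f z‖ + ‖-(f z)‖ := norm_add_le _ _
        _ = ‖x + f z‖ + ‖f z‖ := by rw [norm_neg]
      have h2 : ‖(0 : Y) - g z‖ = ‖f z‖ := by
        rw [zero_sub, norm_neg, g.norm_map, f.norm_map]
      linarith
  have hgY : ∀ y : Y, ‖jY y‖ = ‖y‖ := by
    intro y
    refine le_antisymm ?_ ?_
    · calc ‖jY y‖ ≤ ‖ι (0, y)‖ := Submodule.Quotient.norm_mk_le S _
      _ = ‖(0 : X)‖ + ‖y‖ := lnorm 0 y
      _ = ‖y‖ := by simp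
    · rw [hjY]
      refine key 0 y ‖y‖ fun z => ?_
      have h1 : ‖y‖ ≤ ‖y - g z‖ + ‖g z‖ := by
        calc ‖y‖ = ‖(y - g z) + g z‖ := by congr 1; abel
        _ ≤ ‖y - g z‖ + ‖g z‖ := norm_add_le _ _
      have h2 : ‖(0 : X) + f z‖ = ‖g z‖ := by
        rw [zero_add, f.norm_map, g.norm_map]
      linarith
  refine ⟨E ⧸ S, inferInstance, inferInstance, inferInstance, inferInstance,
    ⟨jX, hfX⟩, ⟨jY, hgY⟩, ?_⟩
  ext z
  show jX (f z) = jY (g z)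
  rw [hjX, hjY, Submodule.Quotient.eq]
  refine ⟨z, ?_⟩
  rw [hT]
  have h1 : ι (f z, 0) - ι (0, g z) = ι ((f z, 0) - (0, g z)) := (map_sub ι _ _).symm
  have h2 : ((f z, 0) - (0, g z) : X × Y) = (f z, -g z) := by
    rw [Prod.mk_sub_mk, sub_zero, zero_sub]
  rw [h1, h2]
  rfl
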